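/- Let G = (V, E) be a finite acyclic digraph with exactly one source s, and let (V1, E1), (V2, E2) be a separation of G along a pair {u, v} of distinct vertices with s ∈ V1. Suppose u and v are incomparable in G (neither u dominates v nor v dominates u). Let w_t be a new vertex not in V. Then the digraph (V1 ∪ {w_t}, E1 ∪ {(u, w_t), (v, w_t)}) has exactly one source, namely s. -/

import Mathlib

/-- `x` dominates `y` in the digraph with edge set `E`: there is a directed
path with at least one edge from `x` to `y`. -/
def Dominates {α : Type*} (E : Finset (α × α)) (x y : α) : Prop :=
  Relation.TransGen (fun a b => (a, b) ∈ E) x y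

/-- A separation of the finite digraph `(V, E)` along the pair `{u, v}` of
distinct vertices into `H1 = (V1, E1)` and `H2 = (V2, E2)`. -/
structure Separation {α : Type*} [DecidableEq α] (V : Finset α) (E : Finset (α × α))
    (u v : α) (V1 V2 : Finset α) (E1 E2 : Finset (α × α)) : Prop where
  ne : u ≠ v
  vUnion : V1 ∪ V2 = V
  vInter : V1 ∩ V2 = {u, v}
  eDisjoint : Disjoint E1 E2
  eUnion : E1 ∪ E2 = E
  mem1 : ∀ e ∈ E1, e.1 ∈ V1 ∧ e.2 ∈ V1
  mem2 : ∀ e ∈ E2, e.1 ∈ V2 ∧ e.2 ∈ V2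
/-- A vertex `w` is a source of the digraph `(V, E)`: it belongs to `V` and
has no incoming edge in `E`. -/
def IsSource {α : Type*} (V : Finset α) (E : Finset (α × α)) (w : α) : Prop :=
  w ∈ V ∧ ∀ e ∈ E, e.2 ≠ w

/-- If `G` is acyclic with unique source `s ∈ V1` and `u`, `v` are
incomparable in `G`, then attaching the marker `M_t` (a new vertex `wt` with
edges `(u, wt)` and `(v, wt)`) to `H1` yields a digraph with exactly one
source, namely `s`. -/
theorem stmt12 {α : Type*} [DecidableEq α] (V V1 V2 : Finset α)
    (E E1 E2 : Finset (α × α)) (u v s wt : α)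
    (hsep : Separation V E u v V1 V2 E1 E2)
    (hacyc : ∀ x : α, ¬ Dominates E x x)
    (hsrc : IsSource V E s) (huniq : ∀ w : α, IsSource V E w → w = s)
    (hs1 : s ∈ V1)
    (hincomp : ¬ Dominates E u v ∧ ¬ Dominates E v u)
    (hwt : wt ∉ V) :
    IsSource (insert wt V1) (insert (u, wt) (insert (v, wt) E1)) s ∧
    ∀ w : α, IsSource (insert wt V1) (insert (u, wt) (insert (v, wt) E1)) w → w = s := by
  obtain ⟨hne, hVu, hVi, hdisj, hEu, hmem1, hmem2⟩ := hsep
  have hE1sub : E1 ⊆ E := hEu ▸ Finset.subset_union_left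
  have hE2sub : E2 ⊆ E := hEu ▸ Finset.subset_union_right
  have hV1sub : V1 ⊆ V := hVu ▸ Finset.subset_union_left
  have hV2sub : V2 ⊆ V := hVu ▸ Finset.subset_union_right
  have hmemV : ∀ e ∈ E, e.1 ∈ V ∧ e.2 ∈ V := by
    intro e he
    rw [← hEu] at he
    rcases Finset.mem_union.1 he with h | h
    · exact ⟨hV1sub (hmem1 e h).1, hV1sub (hmem1 e h).2⟩
    · exact ⟨hV2sub (hmem2 e h).1, hV2sub (hmem2 e h).2⟩
  have hcut : ∀ y, y ∈ V1 → y ∈ V2 → y = u ∨ y = v := by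
    intro y h1 h2
    have : y ∈ V1 ∩ V2 := Finset.mem_inter.2 ⟨h1, h2⟩
    rw [hVi] at this
    simpa using this
  -- Lemma A: every vertex of V is equal to s or dominated by s.
  have hA : ∀ x ∈ V, x = s ∨ Dominates E s x := by
    intro x hx
    set T := {x : α // x ∈ V}
    let R : T → T → Prop := fun a b => Relation.TransGen (fun p q : T => ((p : α), (q : α)) ∈ E) a b
    haveI : IsTrans T R := ⟨fun _ _ _ h1 h2 => h1.trans h2⟩
    haveI : IsIrrefl T R := by
      constructor
      intro a ha
      exact hacyc a
        (Relation.TransGen.lift (fun p : T => (p : α)) (fun p q h => h) _ _ ha)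
    have hwf : WellFounded R := Finite.wellFounded_of_trans_of_irrefl R
    have : ∀ a : T, (a : α) = s ∨ Dominates E s (a : α) := by
      intro a
      induction a using hwf.induction with
      | _ a ih =>
        by_cases has : (a : α) = s
        · exact Or.inl has
        · have hnotsrc : ¬ IsSource V E (a : α) := fun h => has (huniq _ h)
          rw [IsSource] at hnotsrc
          push_neg at hnotsrc
          obtain ⟨e, he, he2⟩ := hnotsrc a.2
          have hp : e.1 ∈ V := (hmemV e he).1
          have hedge : (e.1, (a : α)) ∈ E := by
            rw [← he2]; simpa using he
          rcases ih ⟨e.1, hp⟩ (Relation.TransGen.single (show (((⟨e.1, hp⟩ : T) : α), (a : α)) ∈ E from hedge)) with h | h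
          · exact Or.inr (Relation.TransGen.single (h ▸ hedge))
          · exact Or.inr (h.tail hedge)
    exact this ⟨x, hx⟩
  -- Lemma B: anything dominated by s is in V1 or dominated by u or v.
  have hB : ∀ x, Dominates E s x → x ∈ V1 ∨ ∃ c, (c = u ∨ c = v) ∧ Dominates E c x := by
    intro x hx
    induction hx with
    | single h =>
      rw [← hEu] at h
      rcases Finset.mem_union.1 h with h | h
      · exact Or.inl (hmem1 _ h).2
      · have hs2 : s ∈ V2 := (hmem2 _ h).1
        exact Or.inr ⟨s, hcut s hs1 hs2, Relation.TransGen.single (hE2sub h)⟩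
    | tail hd he ih =>
      rename_i b x'
      rcases ih with hb | ⟨c, hc, hdom⟩
      · rw [← hEu] at he
        rcases Finset.mem_union.1 he with h | h
        · exact Or.inl (hmem1 _ h).2
        · have hb2 : b ∈ V2 := (hmem2 _ h).1
          exact Or.inr ⟨b, hcut b hb hb2, Relation.TransGen.single (hE2sub h)⟩
      · exact Or.inr ⟨c, hc, hdom.tail he⟩
  have hwts : wt ≠ s := fun h => hwt (h ▸ hsrc.1)
  constructor
  · refine ⟨Finset.mem_insert_of_mem hs1, ?_⟩
    intro e he
    rcases Finset.mem_insert.1 he with rfl | he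
    · exact hwts
    rcases Finset.mem_insert.1 he with rfl | he
    · exact hwts
    · exact hsrc.2 e (hE1sub he)
  · intro w hw
    obtain ⟨hwmem, hwedge⟩ := hw
    have hwne : w ≠ wt := by
      have := hwedge (u, wt) (Finset.mem_insert_self _ _)
      exact fun h => this (h ▸ rfl)
    have hw1 : w ∈ V1 := by
      rcases Finset.mem_insert.1 hwmem with h | h
      · exact absurd h hwne
      · exact h
    by_contra hws
    -- w is not a source of G
    have hnotsrc : ¬ IsSource V E w := fun h => hws (huniq _ h)
    rw [IsSource] at hnotsrc
    push_neg at hnotsrc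
    obtain ⟨e, he, he2⟩ := hnotsrc (hV1sub hw1)
    have heE2 : e ∈ E2 := by
      rw [← hEu] at he
      rcases Finset.mem_union.1 he with h | h
      · exact absurd he2 (hwedge e (Finset.mem_insert_of_mem (Finset.mem_insert_of_mem h)))
      · exact h
    have hw2 : w ∈ V2 := he2 ▸ (hmem2 _ heE2).2
    have hwuv : w = u ∨ w = v := hcut w hw1 hw2
    -- a helper: no c ∈ {u,v} can dominate w
    have hkill : ∀ c, (c = u ∨ c = v) → Dominates E c w → False := by
      intro c hc hdom
      rcases hc with rfl | rfl <;> rcases hwuv with rfl | rfl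
      · exact hacyc _ hdom
      · exact hincomp.1 hdom
      · exact hincomp.2 hdom
      · exact hacyc _ hdom
    have hsw : Dominates E s w := by
      rcases hA w (hV1sub hw1) with h | h
      · exact absurd h hws
      · exact h
    -- decompose the last edge of a path from s to w
    obtain ⟨b, hsb, hbw⟩ := Relation.TransGen.tail'_iff.1 hsw
    have hbwE2 : (b, w) ∈ E2 := by
      rw [← hEu] at hbw
      rcases Finset.mem_union.1 hbw with h | h
      · exact absurd rfl (hwedge (b, w) (Finset.mem_insert_of_mem (Finset.mem_insert_of_mem h)))
      · exact h
    have hb2 : b ∈ V2 := (hmem2 _ hbwE2).1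
    have hbwE : (b, w) ∈ E := hE2sub hbwE2
    rcases (Relation.reflTransGen_iff_eq_or_transGen.1 hsb) with rfl | hsb'
    · exact hkill b (hcut b hs1 hb2) (Relation.TransGen.single hbwE)
    · rcases hB b hsb' with hb1 | ⟨c, hc, hdom⟩
      · exact hkill b (hcut b hb1 hb2) (Relation.TransGen.single hbwE)
      · exact hkill c hc (hdom.tail hbwE)
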